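/- Let g : ℕ → ℝ be nonnegative with g(0) = 0, let f ∈ ℤ^n be fixed, and let 0 < ε. Suppose X_1, ..., X_n are pairwise independent Bernoulli random variables where X_d has success probability p_d satisfying p_d ≥ min{1, 9·g(|f_d|)/(ε²·G)} and p_d > 0, where G = ∑_{d=1}^n g(|f_d|) > 0. Define the estimator Ĝ = ∑_{d=1}^n p_d⁻¹ X_d g(|f_d|). Then E[Ĝ] = G, Var(Ĝ) ≤ (ε·G)²/9, and P(|Ĝ − G| ≤ ε·G) ≥ 8/9. -/

import Mathlib

open MeasureTheory ProbabilityTheory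

theorem stmt_2 {Ω : Type*} [MeasureSpace Ω] [IsProbabilityMeasure (ℙ : Measure Ω)]
    (n : ℕ) (g : ℕ → ℝ) (hg0 : g 0 = 0) (hgnn : ∀ x, 0 ≤ g x)
    (f : Fin n → ℤ) (ε : ℝ) (hε : 0 < ε)
    (hG : 0 < ∑ d, g (f d).natAbs)
    (p : Fin n → ℝ) (hp_pos : ∀ d, 0 < p d)
    (hp : ∀ d, min 1 (9 * g (f d).natAbs / (ε ^ 2 * ∑ e, g (f e).natAbs)) ≤ p d)
    (X : Fin n → Ω → ℝ) (hmeas : ∀ d, Measurable (X d))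
    (hBer : ∀ d ω, X d ω = 0 ∨ X d ω = 1)
    (hmean : ∀ d, (∫ ω, X d ω) = p d)
    (hpairwise : ∀ d e, d ≠ e → (∫ ω, X d ω * X e ω) = p d * p e) :
    (∫ ω, ∑ d, (p d)⁻¹ * X d ω * g (f d).natAbs) = (∑ d, g (f d).natAbs) ∧
    variance (fun ω => ∑ d, (p d)⁻¹ * X d ω * g (f d).natAbs) ℙ
      ≤ (ε * ∑ d, g (f d).natAbs) ^ 2 / 9 ∧
    (8 / 9 : ENNReal) ≤
      ℙ {ω | |(∑ d, (p d)⁻¹ * X d ω * g (f d).natAbs) - ∑ d, g (f d).natAbs|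
        ≤ ε * ∑ d, g (f d).natAbs} := by
  set G := ∑ d, g (f d).natAbs with hGdef
  have hX01 : ∀ d ω, 0 ≤ X d ω ∧ X d ω ≤ 1 := by
    intro d ω; rcases hBer d ω with h | h <;> simp [h]
  have hXsq : ∀ d ω, X d ω * X d ω = X d ω := by
    intro d ω; rcases hBer d ω with h | h <;> simp [h]
  have hXmem : ∀ d, MemLp (X d) 2 ℙ := fun d =>
    MemLp.of_bound (hmeas d).aestronglyMeasurable 1
      (Filter.Eventually.of_forall fun ω => by
        rw [Real.norm_eq_abs, abs_le]
        exact ⟨by linarith [(hX01 d ω).1], (hX01 d ω).2⟩)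
  have hXint : ∀ d, Integrable (X d) ℙ := fun d => (hXmem d).integrable (by norm_num)
  have hXXint : ∀ d e, Integrable (fun ω => X d ω * X e ω) ℙ := by
    intro d e
    refine (MemLp.of_bound ((hmeas d).mul (hmeas e)).aestronglyMeasurable 1
      (Filter.Eventually.of_forall fun ω => ?_) : MemLp _ 1 ℙ).integrable le_rfl
    rw [Real.norm_eq_abs, abs_le, Pi.mul_apply]
    have h1 := hX01 d ω; have h2 := hX01 e ω
    constructor <;> nlinarith [h1.1, h1.2, h2.1, h2.2]
  have hterm_int : ∀ d : Fin n, Integrable (fun ω => (p d)⁻¹ * X d ω * g (f d).natAbs) ℙ :=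
    fun d => ((hXint d).const_mul _).mul_const _
  -- the mean
  have hμ : (∫ ω, ∑ d, (p d)⁻¹ * X d ω * g (f d).natAbs) = G := by
    rw [integral_finset_sum _ fun d _ => hterm_int d]
    refine Finset.sum_congr rfl fun d _ => ?_
    rw [integral_mul_const, integral_const_mul, hmean d,
      inv_mul_cancel₀ (hp_pos d).ne', one_mul]
  refine ⟨hμ, ?_, ?_⟩
  -- variance computations
  all_goals {
    have hYmem : MemLp (fun ω => ∑ d, (p d)⁻¹ * X d ω * g (f d).natAbs) 2 ℙ := by
      apply memLp_finset_sum
      intro d _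
      have heq : (fun ω => (p d)⁻¹ * X d ω * g (f d).natAbs)
          = fun ω => ((p d)⁻¹ * g (f d).natAbs) * X d ω := by funext ω; ring
      rw [heq]
      exact (hXmem d).const_mul _
    have hEXX : ∀ d e : Fin n, (∫ ω, X d ω * X e ω)
        = if d = e then p d else p d * p e := by
      intro d e
      by_cases h : d = e
      · subst h
        simp only [if_pos rfl]
        simp_rw [hXsq d]
        exact hmean d
      · rw [if_neg h]; exact hpairwise d e h
    have hvar : variance (fun ω => ∑ d, (p d)⁻¹ * X d ω * g (f d).natAbs) ℙ
        = ∑ d, ((p d)⁻¹ - 1) * g (f d).natAbs ^ 2 := by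
      rw [variance_eq_sub hYmem]
      have hsq : (fun ω => ∑ d, (p d)⁻¹ * X d ω * g (f d).natAbs) ^ 2
          = fun ω => ∑ d, ∑ e, ((p d)⁻¹ * g (f d).natAbs * ((p e)⁻¹ * g (f e).natAbs))
              * (X d ω * X e ω) := by
        funext ω
        simp only [Pi.pow_apply]
        rw [sq, Finset.sum_mul_sum]
        exact Finset.sum_congr rfl fun d _ => Finset.sum_congr rfl fun e _ => by ring
      rw [hsq]
      rw [integral_finset_sum _ fun d _ => integrable_finset_sum _
        fun e _ => (hXXint d e).const_mul _]
      have h2 : ∀ d : Fin n, (∫ ω, ∑ e, ((p d)⁻¹ * g (f d).natAbs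
            * ((p e)⁻¹ * g (f e).natAbs)) * (X d ω * X e ω))
          = ∑ e, ((p d)⁻¹ * g (f d).natAbs * ((p e)⁻¹ * g (f e).natAbs))
            * (if d = e then p d else p d * p e) := by
        intro d
        rw [integral_finset_sum _ fun e _ => (hXXint d e).const_mul _]
        exact Finset.sum_congr rfl fun e _ => by rw [integral_const_mul, hEXX]
      simp_rw [h2]
      have hμ2 : (∫ ω, ∑ d, (p d)⁻¹ * X d ω * g (f d).natAbs) ^ 2
          = ∑ d, ∑ e, g (f d).natAbs * g (f e).natAbs := by
        rw [hμ, hGdef, sq, Finset.sum_mul_sum]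
      rw [hμ2, ← Finset.sum_sub_distrib]
      refine Finset.sum_congr rfl fun d _ => ?_
      rw [← Finset.sum_sub_distrib]
      rw [Finset.sum_eq_single d]
      · simp only [if_pos rfl]
        have := (hp_pos d).ne'
        field_simp
        simp only [↓reduceIte]
        try ring
      · intro e _ hne
        rw [if_neg (Ne.symm hne)]
        have h1 := (hp_pos d).ne'
        have h2 := (hp_pos e).ne'
        field_simp
        try ring
      · intro h; exact absurd (Finset.mem_univ d) h
    have hvar_le : variance (fun ω => ∑ d, (p d)⁻¹ * X d ω * g (f d).natAbs) ℙ
        ≤ (ε * G) ^ 2 / 9 := by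
      rw [hvar]
      have hstep : ∀ d : Fin n, ((p d)⁻¹ - 1) * g (f d).natAbs ^ 2
          ≤ ε ^ 2 * G / 9 * g (f d).natAbs := by
        intro d
        set gd := g (f d).natAbs with hgd
        have hgd0 : 0 ≤ gd := hgnn _
        have hrhs : 0 ≤ ε ^ 2 * G / 9 * gd := by positivity
        rcases le_or_gt 1 (9 * gd / (ε ^ 2 * G)) with h | h
        · -- min = 1, so p d ≥ 1
          have hp1 : (1 : ℝ) ≤ p d := le_trans (by rw [min_eq_left h]) (hp d)
          have : (p d)⁻¹ ≤ 1 := inv_le_one_of_one_le₀ hp1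
          nlinarith
        · have hq : 9 * gd / (ε ^ 2 * G) ≤ p d :=
            le_trans (by rw [min_eq_right h.le]) (hp d)
          rcases eq_or_lt_of_le hgd0 with heq | hgdpos
          · rw [← heq]; simpa using hrhs
          · have hqpos : 0 < 9 * gd / (ε ^ 2 * G) := by positivity
            have hinv : (p d)⁻¹ ≤ ε ^ 2 * G / (9 * gd) := by
              rw [inv_le_comm₀ (hp_pos d) (by positivity)] at *
              calc (ε ^ 2 * G / (9 * gd))⁻¹ = 9 * gd / (ε ^ 2 * G) := by
                    rw [inv_div]
                _ ≤ p d := hq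
            have : (p d)⁻¹ * gd ^ 2 ≤ ε ^ 2 * G / 9 * gd := by
              calc (p d)⁻¹ * gd ^ 2 ≤ ε ^ 2 * G / (9 * gd) * gd ^ 2 := by
                    apply mul_le_mul_of_nonneg_right hinv (by positivity)
                _ = ε ^ 2 * G / 9 * gd := by field_simp
            nlinarith
      calc ∑ d, ((p d)⁻¹ - 1) * g (f d).natAbs ^ 2
          ≤ ∑ d, ε ^ 2 * G / 9 * g (f d).natAbs := Finset.sum_le_sum fun d _ => hstep d
        _ = ε ^ 2 * G / 9 * G := by rw [← Finset.mul_sum]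
        _ = (ε * G) ^ 2 / 9 := by ring
    first
    | exact hvar_le
    | {
      -- Chebyshev
      have hεG : 0 < ε * G := mul_pos hε hG
      have cheb := meas_ge_le_variance_div_sq (μ := ℙ) hYmem hεG
      rw [hμ] at cheb
      have hbound : variance (fun ω => ∑ d, (p d)⁻¹ * X d ω * g (f d).natAbs) ℙ
          / (ε * G) ^ 2 ≤ 1 / 9 := by
        rw [div_le_div_iff₀ (by positivity) (by norm_num)]
        nlinarith [hvar_le]
      have hcompl : ℙ {ω | |(∑ d, (p d)⁻¹ * X d ω * g (f d).natAbs) - G| ≤ ε * G}ᶜ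
          ≤ ENNReal.ofReal (1 / 9) := by
        refine le_trans (le_trans (measure_mono ?_) cheb) (ENNReal.ofReal_le_ofReal hbound)
        intro ω hω
        simp only [Set.mem_compl_iff, Set.mem_setOf_eq, not_le] at hω
        exact le_of_lt hω
      have hYmeas : Measurable (fun ω => ∑ d, (p d)⁻¹ * X d ω * g (f d).natAbs) := by
        apply Finset.measurable_sum
        intro d _
        exact (((hmeas d).const_mul _).mul_const _)
      have hS : MeasurableSet {ω | |(∑ d, (p d)⁻¹ * X d ω * g (f d).natAbs) - G| ≤ ε * G} :=
        measurableSet_le ((hYmeas.sub measurable_const).abs) measurable_const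
      have hsum := prob_add_prob_compl (μ := ℙ) hS
      have h19 : ENNReal.ofReal (1 / 9) = 1 / 9 := by
        rw [ENNReal.ofReal_div_of_pos (by norm_num)]
        norm_num
      rw [h19] at hcompl
      have h89 : (8 / 9 : ENNReal) + 1 / 9 = 1 := by
        rw [ENNReal.div_add_div_same, show (8 + 1 : ENNReal) = 9 by norm_num]
        exact ENNReal.div_self (by norm_num) (by norm_num)
      have hne : (1/9 : ENNReal) ≠ ⊤ :=
        (ENNReal.div_lt_top ENNReal.one_ne_top (by norm_num)).ne
      have hfin : (8 / 9 : ENNReal) + 1 / 9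
          ≤ ℙ {ω | |(∑ d, (p d)⁻¹ * X d ω * g (f d).natAbs) - G| ≤ ε * G} + 1 / 9 :=
        calc (8 / 9 : ENNReal) + 1 / 9 = 1 := h89
          _ = ℙ {ω | |(∑ d, (p d)⁻¹ * X d ω * g (f d).natAbs) - G| ≤ ε * G}
              + ℙ {ω | |(∑ d, (p d)⁻¹ * X d ω * g (f d).natAbs) - G| ≤ ε * G}ᶜ := hsum.symm
          _ ≤ _ := add_le_add_right hcompl _
      exact (ENNReal.add_le_add_iff_right hne).mp hfin
    }
  }
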